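/- For every p ∈ (0,1) and every ω ∈ ℂ, the limit as N → ∞ of ((1−p)^N / ∏_{n=1}^N (2^n − 1)) · det B_N(p; c_0, …, c_N), where c_j = ω^j / j! for 0 ≤ j ≤ N, exists and equals ∫_0^1 e^{ωx} dμ_p(x). -/

import Mathlib

open MeasureTheory

/-- The probability measure on `{0,1}` (encoded as `Bool`, `false` ↔ digit `0`,
`true` ↔ digit `1`) giving mass `p` to the digit `0` and mass `1 - p` to the digit `1`. -/
noncomputable def bernoulliBool (p : ℝ) : Measure Bool :=
  ENNReal.ofReal p • Measure.dirac false + ENNReal.ofReal (1 - p) • Measure.dirac true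

/-- `ν` is the infinite product, over `n ≥ 1` (indexed here by `ℕ`, where index `n`
stands for the digit `n+1`), of the Bernoulli measures `bernoulliBool p`:
it is characterized as the projective limit of the finite product measures. -/
def IsBernoulliProduct (p : ℝ) (ν : Measure (ℕ → Bool)) : Prop :=
  IsProjectiveLimit ν fun J : Finset ℕ => Measure.pi fun _ : J => bernoulliBool p

/-- The binary expansion map sending a 0-1 sequence `(x_n)_{n ≥ 1}` to
`∑_{n=1}^∞ x_n 2^{-n}` (index `n : ℕ` stands for the digit `n+1`). -/
noncomputable def binExpand (x : ℕ → Bool) : ℝ :=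
  ∑' n : ℕ, if x n then ((2 : ℝ) ^ (n + 1))⁻¹ else 0

/-- `μ` is the Bernoulli measure `μ_p` on `ℝ`: the pushforward under the binary
expansion map of the infinite product of Bernoulli measures on `{0,1}`. -/
def IsBernoulliMeasure (p : ℝ) (μ : Measure ℝ) : Prop :=
  ∃ ν : Measure (ℕ → Bool), IsBernoulliProduct p ν ∧ μ = ν.map binExpand

/-- The `(N+1) × (N+1)` complex Hessenberg matrix `B_N(p; c_0, …, c_N)` (1-indexed in the
paper, 0-indexed here): for `0 ≤ i < N` the row `i` (paper row `i+1`) has entries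
`C(i+1, j)` for `j ≤ i`, the entry `(1 - 2^{i+1})/(1-p)` at column `j = i+1`, and `0`
for `j > i+1`; the last row (row `N`) is `(c_0, c_1, …, c_N)`. -/
noncomputable def Bmat (N : ℕ) (p : ℝ) (c : Fin (N + 1) → ℂ) :
    Matrix (Fin (N + 1)) (Fin (N + 1)) ℂ := fun i j =>
  if (i : ℕ) < N then
    if (j : ℕ) ≤ (i : ℕ) then (Nat.choose ((i : ℕ) + 1) (j : ℕ) : ℂ)
    else if (j : ℕ) = (i : ℕ) + 1 then (1 - 2 ^ ((i : ℕ) + 1)) / (1 - (p : ℂ))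
    else 0
  else c j


lemma bern_prob {p : ℝ} (h0 : 0 ≤ p) (h1 : p ≤ 1) : IsProbabilityMeasure (bernoulliBool p) := by
  constructor
  simp [bernoulliBool, ← ENNReal.ofReal_add h0 (by linarith : (0:ℝ) ≤ 1 - p)]

lemma integral_bern {p : ℝ} (h0 : 0 ≤ p) (h1 : p ≤ 1) {E : Type*} [NormedAddCommGroup E]
    [NormedSpace ℝ E] [CompleteSpace E] (f : Bool → E) :
    ∫ b, f b ∂(bernoulliBool p) = p • f false + (1 - p) • f true := by
  have i1 : IsFiniteMeasure (ENNReal.ofReal p • Measure.dirac (false : Bool)) :=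
    ⟨by simp [lt_top_iff_ne_top]⟩
  have i2 : IsFiniteMeasure (ENNReal.ofReal (1-p) • Measure.dirac (true : Bool)) :=
    ⟨by simp [lt_top_iff_ne_top]⟩
  rw [bernoulliBool, integral_add_measure .of_finite .of_finite,
    integral_smul_measure, integral_smul_measure, integral_dirac, integral_dirac]
  simp [ENNReal.toReal_ofReal, h0, show (0:ℝ) ≤ 1 - p by linarith]

lemma summable_pow2 : Summable (fun n : ℕ => ((2 : ℝ) ^ (n + 1))⁻¹) := by
  have : (fun n : ℕ => ((2 : ℝ) ^ (n + 1))⁻¹) = fun n : ℕ => (1/2 : ℝ) * (1/2)^n := by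
    ext n; rw [pow_succ, one_div, inv_pow]; ring
  rw [this]
  exact (summable_geometric_of_lt_one (by norm_num) (by norm_num)).mul_left _

lemma tsum_pow2 : ∑' n : ℕ, ((2 : ℝ) ^ (n + 1))⁻¹ = 1 := by
  have := tsum_geometric_two' 1
  simp only [one_div] at this
  rw [← this]
  congr 1; ext n; rw [pow_succ]; ring

lemma binExpand_summable (x : ℕ → Bool) :
    Summable (fun n => if x n then ((2 : ℝ) ^ (n + 1))⁻¹ else 0) := by
  refine Summable.of_nonneg_of_le (fun n => ?_) (fun n => ?_) summable_pow2
  · split <;> positivity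
  · split
    · exact le_rfl
    · positivity

lemma binExpand_nonneg (x : ℕ → Bool) : 0 ≤ binExpand x :=
  tsum_nonneg (fun n => by split <;> positivity)

lemma binExpand_le_one (x : ℕ → Bool) : binExpand x ≤ 1 := by
  rw [← tsum_pow2]
  refine Summable.tsum_le_tsum (fun n => ?_) (binExpand_summable x) summable_pow2
  split
  · exact le_rfl
  · positivity

lemma continuous_binExpand : Continuous binExpand := by
  refine continuous_tsum (f := fun (n : ℕ) (x : ℕ → Bool) => if x n then ((2 : ℝ) ^ (n + 1))⁻¹ else 0)
    (fun n => ?_) summable_pow2 (fun n x => ?_)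
  · exact Continuous.comp (continuous_of_discreteTopology :
      Continuous fun b : Bool => if b then ((2:ℝ)^(n+1))⁻¹ else 0) (continuous_apply n)
  · rw [Real.norm_eq_abs]
    split
    · rw [abs_of_nonneg (by positivity)]
    · simp [abs_of_nonneg]

lemma measurable_binExpand : Measurable binExpand := continuous_binExpand.measurable

def rN (N : ℕ) (x : ℕ → Bool) (i : Fin N) : Bool := x i

lemma measurable_rN (N : ℕ) : Measurable (rN N) :=
  measurable_pi_lambda _ (fun i => measurable_pi_apply _)

lemma map_rN {p : ℝ} (h0 : 0 ≤ p) (h1 : p ≤ 1) {ν : Measure (ℕ → Bool)}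
    (hν : IsBernoulliProduct p ν) (N : ℕ) :
    ν.map (rN N) = Measure.pi fun _ : Fin N => bernoulliBool p := by
  classical
  haveI := bern_prob h0 h1
  let e : ((Finset.range N : Finset ℕ) : Type) ≃ Fin N :=
    { toFun := fun j => ⟨j.1, Finset.mem_range.mp j.2⟩
      invFun := fun i => ⟨i.1, Finset.mem_range.mpr i.2⟩
      left_inv := fun j => rfl
      right_inv := fun i => rfl }
  have hmp := measurePreserving_piCongrLeft (fun _ : Fin N => bernoulliBool p) e
  have hcomp : rN N = (MeasurableEquiv.piCongrLeft (fun _ : Fin N => Bool) e) ∘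
      (Finset.range N).restrict := by
    ext x i
    have : i = e ⟨(i : ℕ), Finset.mem_range.mpr i.2⟩ := rfl
    rw [Function.comp_apply, this, MeasurableEquiv.coe_piCongrLeft,
      Equiv.piCongrLeft_apply_apply]
    rfl
  rw [hcomp, ← Measure.map_map (MeasurableEquiv.piCongrLeft (fun _ : Fin N => Bool) e).measurable
    (Finset.measurable_restrict _), hν (Finset.range N), hmp.map_eq]

noncomputable def S (N : ℕ) (y : Fin N → Bool) : ℝ :=
  ∑ i : Fin N, if y i then ((2:ℝ) ^ ((i : ℕ) + 1))⁻¹ else 0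

lemma S_nonneg (N : ℕ) (y : Fin N → Bool) : 0 ≤ S N y :=
  Finset.sum_nonneg (fun i _ => by split <;> positivity)

lemma S_le_one (N : ℕ) (y : Fin N → Bool) : S N y ≤ 1 := by
  refine le_trans (Finset.sum_le_sum (g := fun i : Fin N => ((2:ℝ) ^ ((i:ℕ)+1))⁻¹)
    (fun i _ => by split
                   · exact le_rfl
                   · positivity)) ?_
  rw [Fin.sum_univ_eq_sum_range (fun n => ((2:ℝ) ^ (n+1))⁻¹)]
  refine le_trans (Summable.sum_le_tsum (Finset.range N) (fun n _ => by positivity) summable_pow2) ?_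
  rw [tsum_pow2]

lemma S_succ (N : ℕ) (y : Fin (N+1) → Bool) :
    S (N+1) y = (if y 0 then (2:ℝ)⁻¹ else 0) + S N (fun i => y i.succ) / 2 := by
  rw [S, Fin.sum_univ_succ]
  congr 1
  · norm_num
  · rw [S, Finset.sum_div]
    refine Finset.sum_congr rfl (fun i _ => ?_)
    have : ((i.succ : ℕ) + 1) = ((i : ℕ) + 1) + 1 := by simp [Fin.val_succ]
    rw [this, pow_succ, mul_inv]
    split
    · ring
    · simp

lemma S_rN (N : ℕ) (x : ℕ → Bool) :
    S N (rN N x) = ∑ n ∈ Finset.range N, if x n then ((2:ℝ)^(n+1))⁻¹ else 0 := by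
  rw [S]
  simp only [rN]
  exact Fin.sum_univ_eq_sum_range (fun n => if x n then ((2:ℝ)^(n+1))⁻¹ else 0) N

open Filter in
lemma tendsto_S_rN (x : ℕ → Bool) :
    Tendsto (fun N => S N (rN N x)) atTop (nhds (binExpand x)) := by
  have := (binExpand_summable x).hasSum.tendsto_sum_nat
  simpa [S_rN, binExpand] using this
noncomputable def piN (p : ℝ) (N : ℕ) : Measure (Fin N → Bool) :=
  Measure.pi fun _ => bernoulliBool p

noncomputable def A (p : ℝ) (N k : ℕ) : ℝ := ∫ y, (S N y) ^ k ∂(piN p N)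

lemma A_succ {p : ℝ} (h0 : 0 ≤ p) (h1 : p ≤ 1) (N k : ℕ) :
    A p (N+1) k = (p * A p N k + (1-p) *
      ∑ j ∈ Finset.range (k+1), (k.choose j : ℝ) * A p N j) / 2 ^ k := by
  classical
  haveI := bern_prob h0 h1
  have hmp := (measurePreserving_piFinSuccAbove (fun _ : Fin (N+1) => bernoulliBool p) 0).symm
  have he : ∀ z : Bool × (Fin N → Bool),
      (MeasurableEquiv.piFinSuccAbove (fun _ : Fin (N+1) => Bool) 0).symm z
        = Fin.cons z.1 z.2 := by
    intro z
    simp [MeasurableEquiv.piFinSuccAbove, Fin.insertNthEquiv, Fin.insertNth_zero]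
  have step1 : A p (N+1) k = ∫ z : Bool × (Fin N → Bool),
      ((if z.1 then (2:ℝ)⁻¹ else 0) + S N z.2 / 2) ^ k
      ∂((bernoulliBool p).prod (piN p N)) := by
    rw [A, piN, ← hmp.integral_comp (MeasurableEquiv.measurableEmbedding _)
      (fun y => (S (N+1) y) ^ k)]
    refine integral_congr_ae (Filter.Eventually.of_forall (fun z => ?_))
    dsimp only
    rw [he z, S_succ]
    simp [Fin.cons_succ, Fin.cons_zero]
  haveI : IsProbabilityMeasure (piN p N) := by
    rw [piN]; infer_instance
  rw [step1, integral_prod _ Integrable.of_finite, integral_bern h0 h1]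
  simp only [Bool.false_eq_true, if_false, if_true, zero_add]
  have e1 : ∫ t, (S N t / 2) ^ k ∂(piN p N) = A p N k / 2 ^ k := by
    simp_rw [div_pow]
    rw [integral_div]; rfl
  have e2 : ∫ t, ((2:ℝ)⁻¹ + S N t / 2) ^ k ∂(piN p N)
      = (∑ j ∈ Finset.range (k+1), (k.choose j : ℝ) * A p N j) / 2 ^ k := by
    have hpt : ∀ s : ℝ, ((2:ℝ)⁻¹ + s / 2) ^ k
        = (∑ j ∈ Finset.range (k+1), s ^ j * (k.choose j : ℝ)) / 2 ^ k := by
      intro s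
      rw [show (2:ℝ)⁻¹ + s / 2 = (s+1)/2 by ring, div_pow, add_pow]
      simp
    simp_rw [hpt]
    rw [integral_div, integral_finset_sum _ (fun j _ => Integrable.of_finite)]
    congr 1
    refine Finset.sum_congr rfl (fun j _ => ?_)
    rw [integral_mul_const]
    rw [mul_comm]; rfl
  rw [e1, e2]
  simp only [smul_eq_mul]
  ring
section Moments
variable {p : ℝ} {ν : Measure (ℕ → Bool)}

noncomputable def mom (ν : Measure (ℕ → Bool)) (k : ℕ) : ℝ :=
  ∫ x, (binExpand x) ^ k ∂ν

lemma nu_prob (h0 : 0 ≤ p) (h1 : p ≤ 1) (hν : IsBernoulliProduct p ν) :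
    IsProbabilityMeasure ν := by
  haveI := bern_prob h0 h1
  exact hν.isProbabilityMeasure

open Filter in
lemma tendsto_A (h0 : 0 ≤ p) (h1 : p ≤ 1) (hν : IsBernoulliProduct p ν) (k : ℕ) :
    Tendsto (fun N => A p N k) atTop (nhds (mom ν k)) := by
  haveI := nu_prob h0 h1 hν
  have hA : ∀ N, A p N k = ∫ x, (S N (rN N x)) ^ k ∂ν := by
    intro N
    rw [A, piN, ← map_rN h0 h1 hν N,
      integral_map (measurable_rN N).aemeasurable
        (by exact (measurable_of_countable _).aestronglyMeasurable)]
  simp_rw [hA, mom]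
  refine tendsto_integral_of_dominated_convergence (fun _ => 1)
    (fun N => ((measurable_of_countable (fun y : Fin N → Bool => (S N y) ^ k)).comp
      (measurable_rN N)).aestronglyMeasurable)
    (integrable_const 1) (fun N => Filter.Eventually.of_forall (fun x => ?_))
    (Filter.Eventually.of_forall (fun x => ?_))
  · rw [Real.norm_eq_abs, abs_pow]
    exact pow_le_one₀ (abs_nonneg _) (by rw [abs_of_nonneg (S_nonneg _ _)]; exact S_le_one _ _)
  · exact ((continuous_pow k).tendsto _).comp (tendsto_S_rN x)

lemma mom_zero (h0 : 0 ≤ p) (h1 : p ≤ 1) (hν : IsBernoulliProduct p ν) : mom ν 0 = 1 := by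
  haveI := nu_prob h0 h1 hν
  simp [mom]

lemma mom_nonneg (k : ℕ) : 0 ≤ mom ν k :=
  integral_nonneg (fun x => pow_nonneg (binExpand_nonneg x) k)

lemma mom_le_one (h0 : 0 ≤ p) (h1 : p ≤ 1) (hν : IsBernoulliProduct p ν) (k : ℕ) :
    mom ν k ≤ 1 := by
  haveI := nu_prob h0 h1 hν
  calc mom ν k ≤ ∫ _, (1:ℝ) ∂ν := by
        refine integral_mono_of_nonneg (Filter.Eventually.of_forall
          (fun x => pow_nonneg (binExpand_nonneg x) k)) (integrable_const 1)
          (Filter.Eventually.of_forall (fun x => ?_))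
        exact pow_le_one₀ (binExpand_nonneg x) (binExpand_le_one x)
    _ = 1 := by simp

lemma mom_rec (h0 : 0 ≤ p) (h1 : p ≤ 1) (hν : IsBernoulliProduct p ν) (k : ℕ) :
    ((2:ℝ)^k - 1) * mom ν k = (1 - p) * ∑ j ∈ Finset.range k, (k.choose j : ℝ) * mom ν j := by
  have hL : Filter.Tendsto (fun N => A p (N+1) k * 2 ^ k) Filter.atTop
      (nhds (mom ν k * 2 ^ k)) :=
    (((tendsto_A h0 h1 hν k).comp (Filter.tendsto_add_atTop_nat 1)).mul_const _)
  have hR : Filter.Tendsto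
      (fun N => p * A p N k + (1-p) * ∑ j ∈ Finset.range (k+1), (k.choose j : ℝ) * A p N j)
      Filter.atTop
      (nhds (p * mom ν k + (1-p) * ∑ j ∈ Finset.range (k+1), (k.choose j : ℝ) * mom ν j)) := by
    refine (((tendsto_A h0 h1 hν k).const_mul p).add ?_)
    refine Filter.Tendsto.const_mul _ ?_
    exact tendsto_finset_sum _ (fun j _ => (tendsto_A h0 h1 hν j).const_mul _)
  have heq : (fun N => A p (N+1) k * 2 ^ k)
      = fun N => p * A p N k + (1-p) * ∑ j ∈ Finset.range (k+1), (k.choose j : ℝ) * A p N j := by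
    funext N
    rw [A_succ h0 h1 N k]
    field_simp
  rw [heq] at hL
  have hkey : mom ν k * 2 ^ k
      = p * mom ν k + (1-p) * ∑ j ∈ Finset.range (k+1), (k.choose j : ℝ) * mom ν j :=
    tendsto_nhds_unique hL hR
  rw [Finset.sum_range_succ] at hkey
  simp only [Nat.choose_self, Nat.cast_one, one_mul] at hkey
  nlinarith [hkey]

end Moments
section Det

variable {p : ℝ}

lemma row_rel (m : ℕ → ℂ) (hp1 : (1 : ℂ) - (p : ℂ) ≠ 0) (hrec : ∀ k : ℕ, ((2:ℂ)^(k+1) - 1) * m (k+1)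
      = (1 - (p:ℂ)) * ∑ j ∈ Finset.range (k+1), ((k+1).choose j : ℂ) * m j)
    (N : ℕ) (c : Fin (N+1) → ℂ) (i : Fin (N+1)) (hi : (i : ℕ) < N) :
    ∑ j : Fin (N+1), Bmat N p c i j * m (j : ℕ) = 0 := by
  set g : ℕ → ℂ := fun n =>
    (if n ≤ (i:ℕ) then ((((i:ℕ)+1).choose n : ℕ) : ℂ)
     else if n = (i:ℕ)+1 then (1 - 2^((i:ℕ)+1))/(1 - (p:ℂ)) else 0) * m n with hg
  have hterm : ∀ j : Fin (N+1), Bmat N p c i j * m (j:ℕ) = g (j : ℕ) := by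
    intro j
    simp only [hg, Bmat, if_pos hi]
  simp_rw [hterm]
  rw [Fin.sum_univ_eq_sum_range g (N+1)]
  have hsub : Finset.range ((i:ℕ)+2) ⊆ Finset.range (N+1) :=
    Finset.range_subset_range.mpr (by omega)
  rw [← Finset.sum_subset hsub (fun n _ hn => ?_)]
  · rw [Finset.sum_range_succ]
    have h1 : ∀ n ∈ Finset.range ((i:ℕ)+1), g n = (((i:ℕ)+1).choose n : ℂ) * m n := by
      intro n hn
      simp only [hg]
      rw [if_pos (by simp only [Finset.mem_range] at hn; omega)]
    have h2 : g ((i:ℕ)+1) = (1 - 2^((i:ℕ)+1))/(1 - (p:ℂ)) * m ((i:ℕ)+1) := by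
      simp only [hg]
      rw [if_neg (by omega)]
      simp
    rw [Finset.sum_congr rfl h1, h2]
    have hk := hrec (i : ℕ)
    have hmove : (1 - (2:ℂ)^((i:ℕ)+1))/(1 - (p:ℂ)) * m ((i:ℕ)+1)
        = - ∑ n ∈ Finset.range ((i:ℕ)+1), (((i:ℕ)+1).choose n : ℂ) * m n := by
      rw [div_mul_eq_mul_div, div_eq_iff hp1]
      linear_combination -hk
    rw [hmove]
    ring
  · simp only [hg]
    simp only [Finset.mem_range] at hn
    rw [if_neg (by omega), if_neg (by omega), zero_mul]

lemma det_Bmat (m : ℕ → ℂ) (hp1 : (1 : ℂ) - (p : ℂ) ≠ 0) (hm0 : m 0 = 1)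
    (hrec : ∀ k : ℕ, ((2:ℂ)^(k+1) - 1) * m (k+1)
      = (1 - (p:ℂ)) * ∑ j ∈ Finset.range (k+1), ((k+1).choose j : ℂ) * m j)
    (N : ℕ) (c : Fin (N+1) → ℂ) :
    (Bmat N p c).det = (∑ j : Fin (N+1), c j * m (j : ℕ)) *
      ∏ i ∈ Finset.range N, ((2:ℂ)^(i+1) - 1) / (1 - (p:ℂ)) := by
  classical
  set M := Bmat N p c with hM
  set T : Matrix (Fin (N+1)) (Fin (N+1)) ℂ :=
    fun i j => if (j:ℕ) = 0 then m (i:ℕ) else if i = j then 1 else 0 with hT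
  have hTlow : T.BlockTriangular OrderDual.toDual := by
    intro i j hij
    have hij' : i < j := hij
    rw [hT]
    dsimp only
    rw [if_neg (by omega : ¬ (j:ℕ) = 0), if_neg (ne_of_lt hij')]
  have hdetT : T.det = 1 := by
    rw [Matrix.det_of_lowerTriangular T hTlow]
    refine Finset.prod_eq_one (fun i _ => ?_)
    rw [hT]
    dsimp only
    by_cases h : (i:ℕ) = 0
    · rw [if_pos h, h, hm0]
    · rw [if_neg h, if_pos rfl]
  set A := M * T with hA
  have hAapp : ∀ i j, A i j = if (j:ℕ) = 0 then (∑ k : Fin (N+1), M i k * m (k:ℕ)) else M i j := by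
    intro i j
    rw [hA, Matrix.mul_apply]
    by_cases h : (j:ℕ) = 0
    · rw [if_pos h]
      refine Finset.sum_congr rfl (fun k _ => ?_)
      rw [hT]
      dsimp only
      rw [if_pos h]
    · rw [if_neg h]
      rw [Finset.sum_eq_single j (fun k _ hk => by
        rw [hT]; dsimp only; rw [if_neg h, if_neg hk, mul_zero]) (by simp)]
      rw [hT]
      dsimp only
      rw [if_neg h, if_pos rfl, mul_one]
  have hdetA : A.det = M.det := by rw [hA, Matrix.det_mul, hdetT, mul_one]
  have hA0 : ∀ i : Fin (N+1), (i:ℕ) < N → A i 0 = 0 := by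
    intro i hi
    rw [hAapp]
    rw [if_pos (show ((0 : Fin (N+1)) : ℕ) = 0 from rfl)]
    exact row_rel m hp1 hrec N c i hi
  have hAlast : A (Fin.last N) 0 = ∑ j : Fin (N+1), c j * m (j:ℕ) := by
    rw [hAapp, if_pos (show ((0 : Fin (N+1)) : ℕ) = 0 from rfl)]
    refine Finset.sum_congr rfl (fun k _ => ?_)
    rw [hM, Bmat]
    rw [if_neg (by simp)]
  rw [← hdetA, Matrix.det_succ_column_zero]
  rw [Finset.sum_eq_single_of_mem (Fin.last N) (Finset.mem_univ _) (fun i _ hi => by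
    have h' : (i:ℕ) < N := by
      rcases Nat.lt_or_ge (i:ℕ) N with h | h
      · exact h
      · exact absurd (Fin.ext (by rw [Fin.val_last]; omega : (i:ℕ) = (Fin.last N : ℕ))) hi
    simp [hA0 i h'])]
  rw [hAlast]
  have hminor : (A.submatrix (Fin.last N).succAbove Fin.succ).det
      = ∏ i ∈ Finset.range N, ((1:ℂ) - 2^(i+1)) / (1 - (p:ℂ)) := by
    have hentry : ∀ a b : Fin N, A.submatrix (Fin.last N).succAbove Fin.succ a b
        = if (b:ℕ)+1 ≤ (a:ℕ) then ((((a:ℕ)+1).choose ((b:ℕ)+1) : ℕ) : ℂ)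
          else if (b:ℕ) = (a:ℕ) then (1 - 2^((a:ℕ)+1))/(1 - (p:ℂ)) else 0 := by
      intro a b
      rw [Matrix.submatrix_apply, Fin.succAbove_last, hAapp]
      rw [if_neg (by simp), hM, Bmat]
      rw [if_pos (by simp)]
      simp only [Fin.coe_castSucc, Fin.val_succ]
      by_cases h : (b:ℕ)+1 ≤ (a:ℕ)
      · rw [if_pos h, if_pos h]
      · rw [if_neg h, if_neg h]
        by_cases h2 : (b:ℕ) = (a:ℕ)
        · rw [if_pos (by omega), if_pos h2]
        · rw [if_neg (by omega), if_neg h2]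
    have hlow : (A.submatrix (Fin.last N).succAbove Fin.succ).BlockTriangular OrderDual.toDual := by
      intro a b hab
      have hab' : a < b := hab
      rw [hentry]
      rw [if_neg (by omega), if_neg (by omega)]
    rw [Matrix.det_of_lowerTriangular _ hlow]
    have hdiag : ∀ a : Fin N, A.submatrix (Fin.last N).succAbove Fin.succ a a
        = (1 - (2:ℂ)^((a:ℕ)+1)) / (1 - (p:ℂ)) := by
      intro a
      rw [hentry, if_neg (by omega), if_pos rfl]
    rw [Finset.prod_congr rfl (fun a _ => hdiag a)]
    exact Fin.prod_univ_eq_prod_range (fun i => ((1:ℂ) - 2^(i+1)) / (1 - (p:ℂ))) N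
  rw [hminor, Fin.val_last]
  have hpr : ∏ i ∈ Finset.range N, ((2:ℂ)^(i+1) - 1) / (1 - (p:ℂ))
      = (-1:ℂ)^N * ∏ i ∈ Finset.range N, ((1:ℂ) - 2^(i+1)) / (1 - (p:ℂ)) := by
    rw [show ((-1:ℂ))^N = ∏ _i ∈ Finset.range N, (-1:ℂ) by
      rw [Finset.prod_const, Finset.card_range], ← Finset.prod_mul_distrib]
    refine Finset.prod_congr rfl (fun i _ => ?_)
    ring
  rw [hpr]
  ring

end Det
section ExpSum
variable {p : ℝ} {ν : Measure (ℕ → Bool)}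

lemma integral_Icc_eq (ω : ℂ) :
    ∫ x in Set.Icc (0:ℝ) 1, Complex.exp (ω * x) ∂(ν.map binExpand)
      = ∫ x, Complex.exp (ω * (binExpand x : ℂ)) ∂ν := by
  rw [Measure.restrict_map measurable_binExpand measurableSet_Icc,
    show binExpand ⁻¹' (Set.Icc (0:ℝ) 1) = Set.univ from
      Set.eq_univ_of_forall (fun x => Set.mem_Icc.mpr ⟨binExpand_nonneg x, binExpand_le_one x⟩),
    Measure.restrict_univ,
    integral_map measurable_binExpand.aemeasurable
      (Continuous.aestronglyMeasurable (by continuity))]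

lemma hasSum_exp (h0 : 0 ≤ p) (h1 : p ≤ 1) (hν : IsBernoulliProduct p ν) (ω : ℂ) :
    HasSum (fun k : ℕ => ω ^ k / (Nat.factorial k : ℂ) * (mom ν k : ℂ))
      (∫ x, Complex.exp (ω * (binExpand x : ℂ)) ∂ν) := by
  haveI := nu_prob h0 h1 hν
  set f : ℕ → (ℕ → Bool) → ℂ := fun k x => (ω * (binExpand x : ℂ)) ^ k / (Nat.factorial k : ℂ)
    with hf
  have hm : ∀ k, Measurable (f k) := fun k =>
    (((Complex.measurable_ofReal.comp measurable_binExpand).const_mul ω).pow_const k).div_const _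
  have hX : ∀ x, ‖ω * (binExpand x : ℂ)‖ ≤ ‖ω‖ := by
    intro x
    rw [norm_mul]
    refine mul_le_of_le_one_right (norm_nonneg ω) ?_
    rw [Complex.norm_real, Real.norm_eq_abs, abs_of_nonneg (binExpand_nonneg x)]
    exact binExpand_le_one x
  have hnorm : ∀ k x, ‖f k x‖ ≤ ‖ω‖ ^ k / (Nat.factorial k : ℝ) := by
    intro k x
    rw [hf]
    simp only [norm_div, norm_pow, Complex.norm_natCast]
    gcongr
    exact hX x
  have hexp : ∀ x : ℕ → Bool, Complex.exp (ω * (binExpand x : ℂ)) = ∑' k, f k x := by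
    intro x
    rw [Complex.exp_eq_exp_ℂ, NormedSpace.exp_eq_tsum_div]
  have hsumB : Summable (fun k => ‖ω‖ ^ k / (Nat.factorial k : ℝ)) :=
    Real.summable_pow_div_factorial ‖ω‖
  have hlin : ∀ k, ∫⁻ x, ‖f k x‖₊ ∂ν ≤ ENNReal.ofReal (‖ω‖ ^ k / (Nat.factorial k : ℝ)) := by
    intro k
    calc ∫⁻ x, ‖f k x‖₊ ∂ν ≤ ∫⁻ _, ENNReal.ofReal (‖ω‖ ^ k / (Nat.factorial k : ℝ)) ∂ν :=
          lintegral_mono (fun x => by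
            rw [← ENNReal.ofReal_coe_nnreal, coe_nnnorm]
            exact ENNReal.ofReal_le_ofReal (hnorm k x))
      _ = ENNReal.ofReal (‖ω‖ ^ k / (Nat.factorial k : ℝ)) := by
          rw [lintegral_const, measure_univ, mul_one]
  have hne : ∑' k, ∫⁻ x, ‖f k x‖₊ ∂ν ≠ ⊤ := by
    refine ne_top_of_le_ne_top ?_ (ENNReal.tsum_le_tsum hlin)
    rw [← ENNReal.ofReal_tsum_of_nonneg (fun k => by positivity) hsumB]
    exact ENNReal.ofReal_ne_top
  have hint : ∫ x, Complex.exp (ω * (binExpand x : ℂ)) ∂ν = ∑' k, ∫ x, f k x ∂ν := by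
    simp_rw [hexp]
    exact integral_tsum (fun k => (hm k).aestronglyMeasurable) hne
  have hval : ∀ k, ∫ x, f k x ∂ν = ω ^ k / (Nat.factorial k : ℂ) * (mom ν k : ℂ) := by
    intro k
    have hptw : ∀ x, f k x = (ω ^ k / (Nat.factorial k : ℂ)) • (((binExpand x ^ k : ℝ) : ℂ)) := by
      intro x
      rw [hf]
      push_cast
      rw [smul_eq_mul]
      ring
    simp_rw [hptw]
    have hco : ∫ a, ((binExpand a ^ k : ℝ) : ℂ) ∂ν = ((mom ν k : ℝ) : ℂ) := by
      rw [mom]; exact integral_ofReal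
    rw [integral_smul, hco, smul_eq_mul]
  simp_rw [hval] at hint
  have hS : Summable (fun k : ℕ => ω ^ k / (Nat.factorial k : ℂ) * (mom ν k : ℂ)) := by
    refine Summable.of_norm (Summable.of_nonneg_of_le (fun k => norm_nonneg _) (fun k => ?_) hsumB)
    rw [norm_mul, norm_div, norm_pow, Complex.norm_natCast, Complex.norm_real, Real.norm_eq_abs,
      abs_of_nonneg (mom_nonneg _)]
    calc ‖ω‖ ^ k / (Nat.factorial k : ℝ) * mom ν k
        ≤ ‖ω‖ ^ k / (Nat.factorial k : ℝ) * 1 := by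
          gcongr
          exact mom_le_one h0 h1 hν k
      _ = ‖ω‖ ^ k / (Nat.factorial k : ℝ) := mul_one _
  have hfinal := hS.hasSum
  rwa [← hint] at hfinal
end ExpSum

open Filter in
/-- For `p ∈ (0,1)` and `ω ∈ ℂ`,
`((1-p)^N / ∏_{n=1}^N (2^n-1)) · det B_N(p; 1, ω, ω²/2!, …, ω^N/N!) → ∫_0^1 e^{ωx} dμ_p(x)`
as `N → ∞`. -/
theorem stmt15 (p : ℝ) (hp : p ∈ Set.Ioo (0 : ℝ) 1) (μ : Measure ℝ)
    (hμ : IsBernoulliMeasure p μ) (ω : ℂ) :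
    Tendsto
      (fun N : ℕ =>
        (1 - (p : ℂ)) ^ N / (∏ n ∈ Finset.range N, ((2 : ℂ) ^ (n + 1) - 1)) *
          (Bmat N p fun j => ω ^ (j : ℕ) / (Nat.factorial (j : ℕ) : ℂ)).det)
      atTop
      (nhds (∫ x in Set.Icc (0 : ℝ) 1, Complex.exp (ω * x) ∂μ)) := by
  obtain ⟨ν, hν, rfl⟩ := hμ
  obtain ⟨hp0, hp1⟩ := hp
  have h0 : 0 ≤ p := le_of_lt hp0
  have h1 : p ≤ 1 := le_of_lt hp1
  have hp1C : (1 : ℂ) - (p : ℂ) ≠ 0 := by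
    rw [show (1:ℂ) - (p:ℂ) = ((1 - p : ℝ) : ℂ) by push_cast; ring]
    exact Complex.ofReal_ne_zero.mpr (by linarith)
  set m : ℕ → ℂ := fun k => ((mom ν k : ℝ) : ℂ) with hmdef
  have hm0 : m 0 = 1 := by rw [hmdef]; simp [mom_zero h0 h1 hν]
  have hrecC : ∀ k : ℕ, ((2:ℂ)^(k+1) - 1) * m (k+1)
      = (1 - (p:ℂ)) * ∑ j ∈ Finset.range (k+1), (((k+1).choose j : ℕ) : ℂ) * m j := by
    intro k
    have hR := mom_rec h0 h1 hν (k+1)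
    have hcast := congrArg (fun r : ℝ => (r : ℂ)) hR
    push_cast at hcast ⊢
    simpa [hmdef] using hcast
  have hdet : ∀ N : ℕ, (1 - (p : ℂ)) ^ N / (∏ n ∈ Finset.range N, ((2 : ℂ) ^ (n + 1) - 1)) *
        (Bmat N p fun j => ω ^ (j:ℕ) / (Nat.factorial (j : ℕ) : ℂ)).det
      = ∑ j ∈ Finset.range (N+1), ω ^ j / (Nat.factorial j : ℂ) * m j := by
    intro N
    rw [det_Bmat m hp1C hm0 hrecC N _]
    rw [Fin.sum_univ_eq_sum_range (fun j => ω ^ j / (Nat.factorial j : ℂ) * m j) (N+1),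
      Finset.prod_div_distrib, Finset.prod_const, Finset.card_range]
    have hne : (∏ n ∈ Finset.range N, ((2:ℂ)^(n+1) - 1)) ≠ 0 := by
      refine Finset.prod_ne_zero_iff.mpr (fun n _ => ?_)
      rw [show (2:ℂ)^(n+1) - 1 = (((2:ℝ)^(n+1) - 1 : ℝ) : ℂ) by push_cast; ring]
      refine Complex.ofReal_ne_zero.mpr ?_
      have : (1:ℝ) < 2^(n+1) := one_lt_pow₀ (by norm_num) (Nat.succ_ne_zero n)
      linarith
    field_simp
  have hHS := hasSum_exp h0 h1 hν ω
  rw [integral_Icc_eq ω]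
  have htend := hHS.tendsto_sum_nat.comp (tendsto_add_atTop_nat 1)
  exact Tendsto.congr (fun N => (hdet N).symm) htend
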